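/- Let E be a real Banach space and let K be a subset of the dual space E* that is compact and metrizable in the weak* topology. Let f : K → ℝ ∪ {+∞} be proper and lower semicontinuous with respect to the weak* topology on K. Then the set N(f) = {x ∈ E : the function x* ↦ f(x*) − x*(x) does not attain a strict minimum on K} is meagre (of the first Baire category) in E. -/

import Mathlib

set_option maxHeartbeats 1000000
open Topology Filter

lemma ereal_sub_coe_eq (a : EReal) (s : ℝ) (hb : a ≠ ⊥) (ht : a ≠ ⊤) :
    a - (s:ℝ) = ((a.toReal - s : ℝ) : EReal) := by
  induction a using EReal.rec with
  | bot => simp at hb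
  | coe r => norm_num [← EReal.coe_sub]
  | top => simp at ht

lemma ereal_sub_shift (a : EReal) (s t : ℝ) (hb : a ≠ ⊥) :
    a - (s:ℝ) = (a - (t:ℝ)) + ((t - s : ℝ):EReal) := by
  induction a using EReal.rec with
  | bot => simp at hb
  | coe r =>
      rw [← EReal.coe_sub, ← EReal.coe_sub, ← EReal.coe_add]
      congr 1; ring
  | top => rw [EReal.top_sub_coe, EReal.top_sub_coe, EReal.top_add_coe]

lemma ereal_sub_ne_bot (a : EReal) (s : ℝ) (hb : a ≠ ⊥) : a - (s:ℝ) ≠ ⊥ := by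
  induction a using EReal.rec with
  | bot => simp at hb
  | coe r => rw [← EReal.coe_sub]; exact EReal.coe_ne_bot _
  | top => rw [EReal.top_sub_coe]; simp

lemma ereal_sub_ne_top (a : EReal) (s : ℝ) (ht : a ≠ ⊤) : a - (s:ℝ) ≠ ⊤ := by
  induction a using EReal.rec with
  | bot => rw [EReal.bot_sub]; simp
  | coe r => rw [← EReal.coe_sub]; exact EReal.coe_ne_top _
  | top => simp at ht

lemma ereal_top_sub (s : ℝ) : (⊤ : EReal) - (s:ℝ) = ⊤ := EReal.top_sub_coe s

lemma lsc_attains {X : Type*} [TopologicalSpace X] [CompactSpace X] [Nonempty X]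
    {g : X → EReal} (hg : LowerSemicontinuous g) : ∃ p, ∀ q, g p ≤ g q := by
  by_cases htop : ∀ q, g q = ⊤
  · exact ⟨Classical.arbitrary X, fun q => by rw [htop q, htop]⟩
  push_neg at htop
  set μ := ⨅ q, g q with hμ
  have hμtop : μ < ⊤ := by
    obtain ⟨q, hq⟩ := htop
    exact lt_of_le_of_lt (iInf_le _ q) hq.lt_top
  haveI : Nonempty {y : EReal // μ < y} := ⟨⟨⊤, hμtop⟩⟩
  have key : (⋂ y : {y : EReal // μ < y}, {x | g x ≤ y.1}).Nonempty := by
    apply IsCompact.nonempty_iInter_of_directed_nonempty_isCompact_isClosed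
    · intro a b
      rcases le_total a.1 b.1 with h | h
      · exact ⟨a, subset_rfl, fun x hx => le_trans hx h⟩
      · exact ⟨b, fun x hx => le_trans hx h, subset_rfl⟩
    · rintro ⟨y, hy⟩
      obtain ⟨q, hq⟩ := iInf_lt_iff.mp (hμ ▸ hy)
      exact ⟨q, hq.le⟩
    · exact fun y => ((lowerSemicontinuous_iff_isClosed_preimage.mp hg) y.1).isCompact
    · exact fun y => (lowerSemicontinuous_iff_isClosed_preimage.mp hg) y.1
  obtain ⟨p, hp⟩ := key
  refine ⟨p, fun q => ?_⟩
  have h1 : g p ≤ μ := by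
    apply le_of_forall_gt_imp_ge_of_dense
    intro y hy
    exact Set.mem_iInter.mp hp ⟨y, hy⟩
  exact h1.trans (iInf_le _ q)

lemma lsc_sub_cont {X : Type*} [TopologicalSpace X] {f : X → EReal} (hf : LowerSemicontinuous f)
    (hreal : ∀ p, f p ≠ ⊥) {c : X → ℝ} (hc : Continuous c) :
    LowerSemicontinuous (fun p => f p - (c p : ℝ)) := by
  have h2 : LowerSemicontinuous (fun p => ((-(c p) : ℝ) : EReal)) :=
    (EReal.continuous_coe_iff.mpr (hc.neg)).lowerSemicontinuous
  have h3 := hf.add' h2 (fun x => ?_)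
  · have : (fun p => f p - (c p : ℝ)) = fun p => f p + ((-(c p) : ℝ) : EReal) := by
      funext p; rw [sub_eq_add_neg, EReal.coe_neg]
    rw [this]; exact h3
  · apply EReal.continuousAt_add
    · exact Or.inr (by simp)
    · exact Or.inl (hreal x)

lemma weakdual_bound {E : Type*} [NormedAddCommGroup E] [NormedSpace ℝ E] [CompleteSpace E]
    (K : Set (WeakDual ℝ E)) (hcomp : IsCompact K) :
    ∃ R : ℝ, 0 ≤ R ∧ ∀ p : K, ∀ y : E, |(p : WeakDual ℝ E) y| ≤ R * ‖y‖ := by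
  set l : K → E →L[ℝ] ℝ := fun p => ((p : WeakDual ℝ E) : E →L[ℝ] ℝ) with hl
  have happ : ∀ (p : K) (y : E), l p y = (p : WeakDual ℝ E) y := fun p y => rfl
  have hpt : ∀ y : E, ∃ C, ∀ p : K, ‖l p y‖ ≤ C := by
    intro y
    have hcont : Continuous fun q : WeakDual ℝ E => q y := WeakDual.eval_continuous y
    have himg : IsCompact ((fun q : WeakDual ℝ E => q y) '' K) := hcomp.image hcont
    obtain ⟨r, hr⟩ := himg.isBounded.subset_closedBall 0
    exact ⟨r, fun p => by
      simpa [happ, Real.norm_eq_abs, Metric.mem_closedBall, Real.dist_eq] using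
        hr ⟨p, p.2, rfl⟩⟩
  obtain ⟨C, hC⟩ := banach_steinhaus (𝕜 := ℝ) (𝕜₂ := ℝ) (g := l) hpt
  refine ⟨max C 0, le_max_right _ _, fun p y => ?_⟩
  calc |(p : WeakDual ℝ E) y| = ‖l p y‖ := by rw [happ, Real.norm_eq_abs]
    _ ≤ ‖l p‖ * ‖y‖ := (l p).le_opNorm y
    _ ≤ max C 0 * ‖y‖ :=
        mul_le_mul_of_nonneg_right ((hC p).trans (le_max_left _ _)) (norm_nonneg y)

theorem stmt_4 {E : Type*} [NormedAddCommGroup E] [NormedSpace ℝ E] [CompleteSpace E]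
    (K : Set (WeakDual ℝ E)) (hcomp : IsCompact K)
    (hmetr : TopologicalSpace.MetrizableSpace K)
    (f : K → EReal) (hproper : ∃ p, f p ≠ ⊤) (hreal : ∀ p, f p ≠ ⊥)
    (hlsc : LowerSemicontinuous f) :
    IsMeagre {x : E | ¬ ∃ p₀ : K, ∀ p : K, p ≠ p₀ →
      f p₀ - ((p₀ : WeakDual ℝ E) x : ℝ) < f p - ((p : WeakDual ℝ E) x : ℝ)} := by
  classical
  haveI : CompactSpace K := isCompact_iff_compactSpace.mp hcomp
  haveI := hmetr
  letI : MetricSpace K := TopologicalSpace.metrizableSpaceMetric K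
  haveI : Nonempty K := ⟨hproper.choose⟩
  obtain ⟨R, hR0, hR⟩ := weakdual_bound K hcomp
  set g : E → K → EReal := fun x p => f p - ((p : WeakDual ℝ E) x : ℝ) with hgdef
  have hgbot : ∀ (x : E) (p : K), g x p ≠ ⊥ := fun x p => ereal_sub_ne_bot (f p) _ (hreal p)
  have hglsc : ∀ x : E, LowerSemicontinuous (g x) := by
    intro x
    exact lsc_sub_cont hlsc hreal ((WeakDual.eval_continuous x).comp continuous_subtype_val)
  have hmin : ∀ x : E, ∃ p, ∀ q, g x p ≤ g x q := fun x => lsc_attains (hglsc x)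
  obtain ⟨p₀, hp₀⟩ := hproper
  have hfin : ∀ (x : E) (p : K), (∀ q, g x p ≤ g x q) → f p ≠ ⊤ := by
    intro x p hp hf
    have h1 : g x p = ⊤ := by rw [hgdef]; simp only; rw [hf]; exact ereal_top_sub _
    have h2 : g x p₀ ≠ ⊤ := ereal_sub_ne_top (f p₀) _ hp₀
    exact h2 (top_le_iff.mp (h1 ▸ hp p₀))
  have hval : ∀ (x : E) (p : K), f p ≠ ⊤ →
      g x p = (((f p).toReal - (p : WeakDual ℝ E) x : ℝ) : EReal) :=
    fun x p h => ereal_sub_coe_eq (f p) _ (hreal p) h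
  have hkey : ∀ (x : E) (p : K), (∀ q, g x p ≤ g x q) → ∀ q : K, f q ≠ ⊤ →
      (f p).toReal - (p : WeakDual ℝ E) x ≤ (f q).toReal - (q : WeakDual ℝ E) x := by
    intro x p hp q hq
    have := hp q
    rw [hval x p (hfin x p hp), hval x q hq] at this
    exact_mod_cast this
  -- countable separating family
  obtain ⟨T, hTc, hTsep⟩ : ∃ T : Set E, T.Countable ∧
      ∀ p q : K, p ≠ q → ∃ v ∈ T, (p : WeakDual ℝ E) v ≠ (q : WeakDual ℝ E) v := by
    haveI : SecondCountableTopology K := inferInstance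
    set u : E → Set (K × K) := fun v =>
      {z | (z.1 : WeakDual ℝ E) v ≠ (z.2 : WeakDual ℝ E) v} with hu
    have hopen : ∀ v, IsOpen (u v) := by
      intro v
      have h1 : Continuous fun z : K × K => (z.1 : WeakDual ℝ E) v :=
        (WeakDual.eval_continuous v).comp (continuous_subtype_val.comp continuous_fst)
      have h2 : Continuous fun z : K × K => (z.2 : WeakDual ℝ E) v :=
        (WeakDual.eval_continuous v).comp (continuous_subtype_val.comp continuous_snd)
      exact isOpen_ne_fun h1 h2
    obtain ⟨T, hTc, hT⟩ := TopologicalSpace.isOpen_iUnion_countable u hopen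
    refine ⟨T, hTc, fun p q hpq => ?_⟩
    have hmem : (p, q) ∈ ⋃ v, u v := by
      simp only [Set.mem_iUnion]
      by_contra h
      push_neg at h
      simp only [hu, Set.mem_setOf_eq, not_not] at h
      exact hpq (Subtype.ext (ContinuousLinearMap.ext fun y => h y))
    rw [← hT] at hmem
    simp only [Set.mem_iUnion, exists_prop] at hmem
    obtain ⟨v, hvT, hv⟩ := hmem
    exact ⟨v, hvT, hv⟩
  -- bad sets
  set S : E → ℝ → Set E := fun v c => {x | ∃ p q : K, (∀ r, g x p ≤ g x r) ∧
    (∀ r, g x q ≤ g x r) ∧ c ≤ |(p : WeakDual ℝ E) v - (q : WeakDual ℝ E) v|} with hSdef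
  have hlim : ∀ (xs : ℕ → E) (x : E) (ps : ℕ → K) (p : K),
      Tendsto xs atTop (𝓝 x) → Tendsto ps atTop (𝓝 p) →
      (∀ j, ∀ r, g (xs j) (ps j) ≤ g (xs j) r) → ∀ r, g x p ≤ g x r := by
    intro xs x ps p hxs hps hM r
    by_cases hr : g x r = ⊤
    · rw [hr]; exact le_top
    by_contra hlt
    rw [not_le] at hlt
    obtain ⟨y, hy1, hy2⟩ := EReal.exists_between_coe_real hlt
    have hev1 : ∀ᶠ j in atTop, (y : EReal) < g x (ps j) :=
      hps.eventually (hglsc x p _ hy2)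
    set ρ := (g x r).toReal with hρ
    have hrρ : g x r = (ρ : EReal) := (EReal.coe_toReal hr (hgbot x r)).symm
    set ε : ℕ → ℝ := fun j => ((r : WeakDual ℝ E) x - (r : WeakDual ℝ E) (xs j))
      + ((ps j : WeakDual ℝ E) (xs j) - (ps j : WeakDual ℝ E) x) with hε
    have hub : ∀ j, g x (ps j) ≤ ((ρ + ε j : ℝ) : EReal) := by
      intro j
      have e1 : g x (ps j) = g (xs j) (ps j)
          + (((ps j : WeakDual ℝ E) (xs j) - (ps j : WeakDual ℝ E) x : ℝ) : EReal) :=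
        ereal_sub_shift (f (ps j)) _ _ (hreal _)
      have e2 : g (xs j) r = g x r
          + (((r : WeakDual ℝ E) x - (r : WeakDual ℝ E) (xs j) : ℝ) : EReal) :=
        ereal_sub_shift (f r) _ _ (hreal _)
      calc g x (ps j) = g (xs j) (ps j)
            + (((ps j : WeakDual ℝ E) (xs j) - (ps j : WeakDual ℝ E) x : ℝ) : EReal) := e1
        _ ≤ g (xs j) r
            + (((ps j : WeakDual ℝ E) (xs j) - (ps j : WeakDual ℝ E) x : ℝ) : EReal) :=
            add_le_add (hM j r) le_rfl
        _ = ((ρ + ε j : ℝ) : EReal) := by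
            rw [e2, hrρ, ← EReal.coe_add, ← EReal.coe_add, EReal.coe_eq_coe_iff, hε]
            ring
    have hε0 : Tendsto ε atTop (𝓝 0) := by
      have hb : ∀ j, |ε j| ≤ |(r : WeakDual ℝ E) x - (r : WeakDual ℝ E) (xs j)| + R * ‖xs j - x‖ := by
        intro j
        refine (abs_add_le _ _).trans (add_le_add le_rfl ?_)
        have : (ps j : WeakDual ℝ E) (xs j) - (ps j : WeakDual ℝ E) x
            = (ps j : WeakDual ℝ E) (xs j - x) := by
          rw [map_sub]
        rw [this]
        exact hR (ps j) _
      have ht1 : Tendsto (fun j => |(r : WeakDual ℝ E) x - (r : WeakDual ℝ E) (xs j)|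
          + R * ‖xs j - x‖) atTop (𝓝 0) := by
        have hc1 : Tendsto (fun j => (r : WeakDual ℝ E) (xs j)) atTop
            (𝓝 ((r : WeakDual ℝ E) x)) :=
          ((r : WeakDual ℝ E).continuous.tendsto x).comp hxs
        have hc2 : Tendsto (fun j => ‖xs j - x‖) atTop (𝓝 0) :=
          (tendsto_iff_norm_sub_tendsto_zero.mp hxs)
        have h4 : Tendsto (fun j => |(r : WeakDual ℝ E) x - (r : WeakDual ℝ E) (xs j)|
            + R * ‖xs j - x‖) atTop
            (𝓝 (|(r : WeakDual ℝ E) x - (r : WeakDual ℝ E) x| + R * 0)) :=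
          ((tendsto_const_nhds (x := (r : WeakDual ℝ E) x)).sub hc1).abs.add (hc2.const_mul R)
        simpa using h4
      have h0 : Tendsto (fun j => |ε j|) atTop (𝓝 0) :=
        squeeze_zero (fun j => abs_nonneg _) hb ht1
      exact (tendsto_zero_iff_abs_tendsto_zero ε).mpr h0
    have hρy : ρ < y := by
      have := hrρ ▸ hy1
      exact_mod_cast this
    have hev2 : ∀ᶠ j in atTop, ρ + ε j < y := by
      have ht : Tendsto (fun j => ρ + ε j) atTop (𝓝 (ρ + 0)) := tendsto_const_nhds.add hε0
      rw [add_zero] at ht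
      exact ht.eventually_lt_const hρy
    obtain ⟨j, h1, h2⟩ := (hev1.and hev2).exists
    have : g x (ps j) ≤ ((y : ℝ) : EReal) :=
      (hub j).trans (by exact_mod_cast h2.le)
    exact absurd (lt_of_lt_of_le h1 this) (lt_irrefl _)
  have hclosed : ∀ (v : E) (c : ℝ), IsClosed (S v c) := by
    intro v c
    have hev : Continuous fun p : K => (p : WeakDual ℝ E) v :=
      (WeakDual.eval_continuous v).comp continuous_subtype_val
    apply IsSeqClosed.isClosed
    intro xs x hxm hx
    choose ps qs h1 h2 h3 using hxm
    obtain ⟨p, -, φ, hφ, hp⟩ := IsCompact.tendsto_subseq (x := ps) isCompact_univ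
      (fun n => Set.mem_univ _)
    obtain ⟨q, -, ψ, hψ, hq⟩ := IsCompact.tendsto_subseq (x := fun j => qs (φ j)) isCompact_univ
      (fun n => Set.mem_univ _)
    have hxss : Tendsto (fun j => xs (φ (ψ j))) atTop (𝓝 x) :=
      hx.comp ((hφ.comp hψ).tendsto_atTop)
    refine ⟨p, q, ?_, ?_, ?_⟩
    · exact hlim (fun j => xs (φ (ψ j))) x (fun j => ps (φ (ψ j))) p hxss
        (hp.comp hψ.tendsto_atTop) (fun j => h1 _)
    · exact hlim (fun j => xs (φ (ψ j))) x (fun j => qs (φ (ψ j))) q hxss hq (fun j => h2 _)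
    · have hc1 : Tendsto (fun j => |((ps (φ (ψ j)) : WeakDual ℝ E)) v
          - ((qs (φ (ψ j)) : WeakDual ℝ E)) v|) atTop
          (𝓝 |(p : WeakDual ℝ E) v - (q : WeakDual ℝ E) v|) :=
        (((hev.tendsto p).comp (hp.comp hψ.tendsto_atTop)).sub
          ((hev.tendsto q).comp hq)).abs
      exact ge_of_tendsto hc1 (Eventually.of_forall (fun j => h3 _))
  have hint : ∀ (v : E) (c : ℝ), 0 < c → interior (S v c) = ∅ := by
    intro v c hc
    by_contra hne
    obtain ⟨x₀, hx₀⟩ := Set.nonempty_iff_ne_empty.mpr hne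
    obtain ⟨ε, hε, hball⟩ := Metric.isOpen_iff.mp isOpen_interior x₀ hx₀
    have hball' : Metric.ball x₀ ε ⊆ S v c := hball.trans interior_subset
    obtain ⟨m, hm⟩ := exists_nat_gt (2 * (R * ‖v‖) / c)
    have hmc : 2 * (R * ‖v‖) < (m : ℝ) * c := by
      rw [div_lt_iff₀ hc] at hm; linarith
    set δ := ε / (((m : ℝ) + 2) * (‖v‖ + 1)) with hδ
    have hδpos : 0 < δ := by positivity
    set xx : ℕ → E := fun i => x₀ + (((i : ℝ) + 1) * δ) • v with hxx
    have hxxmem : ∀ i : ℕ, i ≤ m → xx i ∈ S v c := by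
      intro i hi
      apply hball'
      rw [Metric.mem_ball, dist_eq_norm]
      have h1 : xx i - x₀ = (((i : ℝ) + 1) * δ) • v := by rw [hxx]; simp
      rw [h1, norm_smul, Real.norm_eq_abs, abs_of_pos (by positivity)]
      have h2 : ((i : ℝ) + 1) * δ * ‖v‖ ≤ ((m : ℝ) + 1) * δ * ‖v‖ := by
        have : (i : ℝ) ≤ m := Nat.cast_le.mpr hi
        have h3 : ((i : ℝ) + 1) * δ ≤ ((m : ℝ) + 1) * δ := by nlinarith
        exact mul_le_mul_of_nonneg_right h3 (norm_nonneg v)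
      refine lt_of_le_of_lt h2 ?_
      rw [hδ, show ((m:ℝ) + 1) * (ε / (((m:ℝ) + 2) * (‖v‖ + 1))) * ‖v‖
          = ε * ((((m:ℝ) + 1) * ‖v‖) / (((m:ℝ) + 2) * (‖v‖ + 1))) by ring]
      have hfrac : (((m:ℝ) + 1) * ‖v‖) / (((m:ℝ) + 2) * (‖v‖ + 1)) < 1 := by
        rw [div_lt_one (by positivity)]
        nlinarith [norm_nonneg v, (Nat.cast_nonneg m : (0:ℝ) ≤ (m:ℝ))]
      calc ε * ((((m:ℝ) + 1) * ‖v‖) / (((m:ℝ) + 2) * (‖v‖ + 1))) < ε * 1 :=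
            mul_lt_mul_of_pos_left hfrac hε
        _ = ε := mul_one ε
    have H : ∀ i : ℕ, i ≤ m → ∃ p q : K, (∀ r, g (xx i) p ≤ g (xx i) r) ∧
        (∀ r, g (xx i) q ≤ g (xx i) r) ∧
        c ≤ |(p : WeakDual ℝ E) v - (q : WeakDual ℝ E) v| := fun i hi => hxxmem i hi
    choose! p q hp hq habs using H
    have heval : ∀ (w : K) (k : ℕ), (w : WeakDual ℝ E) (xx k)
        = (w : WeakDual ℝ E) x₀ + (((k : ℝ) + 1) * δ) * (w : WeakDual ℝ E) v := by
      intro w k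
      rw [hxx]
      simp [map_add, map_smul, smul_eq_mul]
    have hstep : ∀ (a b : K) (i j : ℕ), i < j → j ≤ m →
        (∀ r, g (xx i) a ≤ g (xx i) r) → (∀ r, g (xx j) b ≤ g (xx j) r) →
        (a : WeakDual ℝ E) v ≤ (b : WeakDual ℝ E) v := by
      intro a b i j hij hjm ha hb
      have h1 := hkey (xx i) a ha b (hfin (xx j) b hb)
      have h2 := hkey (xx j) b hb a (hfin (xx i) a ha)
      rw [heval a i, heval b i] at h1
      rw [heval a j, heval b j] at h2
      have hcast : (i : ℝ) < (j : ℝ) := Nat.cast_lt.mpr hij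
      by_contra hab
      rw [not_le] at hab
      have hprod : 0 < (((j:ℝ) + 1) * δ - ((i:ℝ) + 1) * δ)
          * ((a : WeakDual ℝ E) v - (b : WeakDual ℝ E) v) := by
        apply mul_pos
        · nlinarith
        · linarith
      nlinarith [h1, h2, hprod]
    set sv : ℕ → ℝ := fun i => min ((p i : WeakDual ℝ E) v) ((q i : WeakDual ℝ E) v) with hsv
    have hgap : ∀ i j : ℕ, i < j → j ≤ m → sv i + c ≤ sv j := by
      intro i j hij hjm
      have him : i ≤ m := (le_of_lt hij).trans hjm
      have h1 := hstep (p i) (p j) i j hij hjm (hp i him) (hp j hjm)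
      have h2 := hstep (p i) (q j) i j hij hjm (hp i him) (hq j hjm)
      have h3 := hstep (q i) (p j) i j hij hjm (hq i him) (hp j hjm)
      have h4 := hstep (q i) (q j) i j hij hjm (hq i him) (hq j hjm)
      have h5 := habs i him
      have hmax : sv i + c ≤ max ((p i : WeakDual ℝ E) v) ((q i : WeakDual ℝ E) v) := by
        rcases le_total ((p i : WeakDual ℝ E) v) ((q i : WeakDual ℝ E) v) with h | h
        · rw [hsv]
          simp only [min_eq_left h, max_eq_right h]
          rw [abs_sub_comm, abs_of_nonneg (by linarith)] at h5
          linarith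
        · rw [hsv]
          simp only [min_eq_right h, max_eq_left h]
          rw [abs_of_nonneg (by linarith)] at h5
          linarith
      have h6 : max ((p i : WeakDual ℝ E) v) ((q i : WeakDual ℝ E) v) ≤ sv j :=
        le_min (max_le h1 h3) (max_le h2 h4)
      linarith
    have hchain : ∀ i : ℕ, i ≤ m → sv 0 + (i : ℝ) * c ≤ sv i := by
      intro i
      induction i with
      | zero => intro _; simp
      | succ k ih =>
          intro hk
          have hkm : k ≤ m := Nat.le_of_succ_le hk
          have := hgap k (k + 1) (Nat.lt_succ_self k) hk
          have := ih hkm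
          push_cast
          linarith
    have hb1 : ∀ i : ℕ, i ≤ m → -(R * ‖v‖) ≤ sv i ∧ sv i ≤ R * ‖v‖ := by
      intro i hi
      have h1 := hR (p i) v
      have h2 := hR (q i) v
      rw [abs_le] at h1 h2
      constructor
      · exact le_min h1.1 h2.1
      · exact (min_le_left _ _).trans h1.2
    have hfin1 := hchain m le_rfl
    have hb0 := hb1 0 (Nat.zero_le m)
    have hbm := hb1 m le_rfl
    linarith [hfin1, hb0.1, hbm.2, hmc]
  -- conclusion
  rw [isMeagre_iff_countable_union_isNowhereDense]
  refine ⟨(fun vn : E × ℕ => S vn.1 (1/(vn.2+1))) '' (T ×ˢ Set.univ), ?_, ?_, ?_⟩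
  · rintro t ⟨⟨v, n⟩, ⟨hv, -⟩, rfl⟩
    rw [IsClosed.isNowhereDense_iff (hclosed _ _)]
    exact hint _ _ (by positivity)
  · exact (hTc.prod Set.countable_univ).image _
  · intro x hx
    simp only [Set.mem_setOf_eq] at hx
    obtain ⟨p, hp⟩ := hmin x
    have : ¬ ∀ q : K, q ≠ p → g x p < g x q := fun h => hx ⟨p, h⟩
    push_neg at this
    obtain ⟨q, hqp, hq⟩ := this
    have hqmin : ∀ r, g x q ≤ g x r := fun r => hq.trans (hp r)
    obtain ⟨v, hvT, hv⟩ := hTsep q p hqp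
    have hne : (0:ℝ) < |(q : WeakDual ℝ E) v - (p : WeakDual ℝ E) v| :=
      abs_pos.mpr (sub_ne_zero.mpr hv)
    obtain ⟨n, hn⟩ := exists_nat_one_div_lt hne
    refine Set.mem_sUnion.mpr ⟨S v (1/(n+1)), ⟨⟨v, n⟩, ⟨hvT, trivial⟩, rfl⟩, ?_⟩
    exact ⟨q, p, hqmin, hp, hn.le⟩
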